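/- arXiv:1510.01952 — 2 statements merged into one kernel-verified Lean document; each statement's English description precedes it below -/
import Mathlib

section
/- For every integer n ≥ 1, the number of UDU-equivalence classes of ballot paths of length n equals f_n, the n-th Fibonacci number. -/
/-- A path is a list of steps: `true` is an up-step U, `false` is a down-step D. -/
abbrev Step := Bool

/-- The height of the `j`-th lattice point of the path `p`. -/
def pathHeight (p : List Bool) (j : ℕ) : ℤ :=
  ((p.take j).count true : ℤ) - ((p.take j).count false : ℤ)

/-- A ballot path: every prefix has at least as many U's as D's. -/
def IsBallot (p : List Bool) : Prop :=
  ∀ k : ℕ, (p.take k).count false ≤ (p.take k).count true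

/-- A Dyck path: a ballot path with equally many U's and D's. -/
def IsDyck (p : List Bool) : Prop :=
  IsBallot p ∧ p.count true = p.count false

/-- The string `τ` occurs at (0-indexed) position `i` of the path `p`. -/
def OccursAt (τ p : List Bool) (i : ℕ) : Prop :=
  (p.drop i).take τ.length = τ

/-- Two paths are `τ`-equivalent: same length and occurrences of `τ` at the same positions. -/
def PathEquiv (τ p q : List Bool) : Prop :=
  p.length = q.length ∧ ∀ i : ℕ, OccursAt τ p i ↔ OccursAt τ q i

/-- The setoid of `τ`-equivalence on ballot paths of length `n`. -/
def ballotSetoid (τ : List Bool) (n : ℕ) :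
    Setoid {p : List Bool // IsBallot p ∧ p.length = n} where
  r p q := PathEquiv τ p.1 q.1
  iseqv := ⟨fun _ => ⟨rfl, fun _ => Iff.rfl⟩,
            fun h => ⟨h.1.symm, fun i => (h.2 i).symm⟩,
            fun h1 h2 => ⟨h1.1.trans h2.1, fun i => (h1.2 i).trans (h2.2 i)⟩⟩

/-- The number of `τ`-equivalence classes of ballot paths of length `n`. -/
noncomputable def numBallotClasses (τ : List Bool) (n : ℕ) : ℕ :=
  Nat.card (Quotient (ballotSetoid τ n))

/-- The setoid of `τ`-equivalence on Dyck paths of semilength `n`. -/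
def dyckSetoid (τ : List Bool) (n : ℕ) :
    Setoid {p : List Bool // IsDyck p ∧ p.length = 2 * n} where
  r p q := PathEquiv τ p.1 q.1
  iseqv := ⟨fun _ => ⟨rfl, fun _ => Iff.rfl⟩,
            fun h => ⟨h.1.symm, fun i => (h.2 i).symm⟩,
            fun h1 h2 => ⟨h1.1.trans h2.1, fun i => (h1.2 i).trans (h2.2 i)⟩⟩

/-- The number of `τ`-equivalence classes of Dyck paths of semilength `n`. -/
noncomputable def numDyckClasses (τ : List Bool) (n : ℕ) : ℕ :=
  Nat.card (Quotient (dyckSetoid τ n))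

/-! ### Auxiliary development -/

/-- No two adjacent `true`s. -/
def adjFree (l : List Bool) : Prop := l.Chain' (fun a b => a = true → b = false)

/-- Lists of length `m` with no two adjacent `true`s. -/
def goodT (m : ℕ) := {l : List Bool // l.length = m ∧ adjFree l}

/-- Canonical path with UDU occurrences exactly at the `true` positions of `l`. -/
def canonPath (l : List Bool) : List Bool := true :: (l.map not ++ [true])

/-- The occurrence bit-list of UDU in `p`, positions `0..m-1`. -/
def occList (p : List Bool) (m : ℕ) : List Bool :=
  (List.range m).map fun i => (p.drop i).take 3 == [true, false, true]

lemma occursAt_iff (p : List Bool) (i : ℕ) :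
    OccursAt [true, false, true] p i ↔
      p[i]? = some true ∧ p[i+1]? = some false ∧ p[i+2]? = some true := by
  have h0 : p[i]? = (p.drop i)[0]? := by rw [List.getElem?_drop, Nat.add_zero]
  have h1 : p[i+1]? = (p.drop i)[1]? := by rw [List.getElem?_drop]
  have h2 : p[i+2]? = (p.drop i)[2]? := by rw [List.getElem?_drop]
  rw [OccursAt, h0, h1, h2]
  rcases p.drop i with _ | ⟨a, _ | ⟨b, _ | ⟨c, rest⟩⟩⟩ <;> simp

lemma not_occurs_of_ge {p : List Bool} {i : ℕ} (hp : p.length ≤ i + 2) :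
    ¬ OccursAt [true, false, true] p i := by
  rw [occursAt_iff]
  rintro ⟨-, -, h⟩
  rw [List.getElem?_eq_none hp] at h
  exact absurd h (by simp)

lemma not_occ_adjacent (p : List Bool) (i : ℕ) :
    ¬ (OccursAt [true, false, true] p i ∧ OccursAt [true, false, true] p (i+1)) := by
  rw [occursAt_iff, occursAt_iff]
  rintro ⟨⟨-, h1, -⟩, h2, -, -⟩
  rw [h1] at h2
  exact Bool.noConfusion (Option.some.inj h2)

lemma adjFree.not_both {l : List Bool} (h : adjFree l) {i : ℕ}
    (h1 : l[i]? = some true) (h2 : l[i+1]? = some true) : False := by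
  obtain ⟨hi1, hv1⟩ := List.getElem?_eq_some_iff.mp h1
  obtain ⟨hi2, hv2⟩ := List.getElem?_eq_some_iff.mp h2
  unfold adjFree List.Chain' at h
  rw [List.isChain_iff_getElem] at h
  have := h i (by omega)
  rw [hv1, hv2] at this
  exact Bool.noConfusion (this rfl)

/-! ### `canonPath` getElem lemmas -/

lemma canon_length (l : List Bool) : (canonPath l).length = l.length + 2 := by
  simp [canonPath]

lemma canon_get_zero (l : List Bool) : (canonPath l)[0]? = some true := by simp [canonPath]

lemma canon_get_mid (l : List Bool) {k : ℕ} (h : k < l.length) :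
    (canonPath l)[k+1]? = some (!(l[k])) := by
  simp [canonPath, List.getElem?_append, h, List.getElem?_eq_getElem h]

lemma canon_get_last (l : List Bool) : (canonPath l)[l.length + 1]? = some true := by
  simp [canonPath, List.getElem?_append]

lemma canon_get_none (l : List Bool) {k : ℕ} (h : l.length + 2 ≤ k) :
    (canonPath l)[k]? = none :=
  List.getElem?_eq_none (by rw [canon_length]; exact h)

/-- Occurrence characterization of the canonical path. -/
lemma canon_occ {l : List Bool} (hl : adjFree l) (i : ℕ) :
    OccursAt [true, false, true] (canonPath l) i ↔ ∃ h : i < l.length, l[i] = true := by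
  rw [occursAt_iff]
  constructor
  · rintro ⟨hA, hB, hC⟩
    have hi : i < l.length := by
      by_contra hcon
      push_neg at hcon
      rcases Nat.lt_or_ge (i+1) (l.length + 2) with h' | h'
      · have : i + 1 = l.length + 1 := by omega
        rw [this, canon_get_last] at hB
        exact Bool.noConfusion (Option.some.inj hB)
      · rw [canon_get_none l h'] at hB
        exact absurd hB (by simp)
    refine ⟨hi, ?_⟩
    rw [canon_get_mid l hi] at hB
    have := Option.some.inj hB
    simpa using this
  · rintro ⟨hi, ht⟩
    refine ⟨?_, ?_, ?_⟩
    · cases i with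
      | zero => exact canon_get_zero l
      | succ j =>
        have hj : j < l.length := by omega
        rw [canon_get_mid l hj]
        have hlj : l[j] = false := by
          cases hlj : l[j] with
          | false => rfl
          | true =>
            exact (hl.not_both
              (by rw [List.getElem?_eq_getElem hj, hlj])
              (by rw [List.getElem?_eq_getElem hi, ht])).elim
        rw [hlj]
        rfl
    · rw [canon_get_mid l hi, ht]
      rfl
    · rcases Nat.lt_or_ge (i+1) l.length with h' | h'
      · rw [canon_get_mid l h']
        have : l[i+1] = false := by
          cases hlj : l[i+1] with
          | false => rfl
          | true =>
            exact (hl.not_both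
              (by rw [List.getElem?_eq_getElem hi, ht])
              (by rw [List.getElem?_eq_getElem h', hlj])).elim
        rw [this]
        rfl
      · have : i + 2 = l.length + 1 := by omega
        rw [this, canon_get_last]

/-! ### `canonPath` is a ballot path -/

lemma count_false_add_count_true (L : List Bool) : L.count false + L.count true = L.length := by
  induction L with
  | nil => simp
  | cons a l ih => cases a <;> simp [List.count_cons] <;> omega

lemma ballot_aux (k : ℕ) : ∀ (w : List Bool), w.Chain' (fun a b => a = true ∨ b = true) →
    w.head? ≠ some false → 2 * (w.take k).count false ≤ k := by
  induction k using Nat.strong_induction_on with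
  | _ k ih =>
    intro w hc hh
    match w, hc, hh with
    | [], _, _ => simp
    | false :: w', _, hh => exact absurd rfl hh
    | [true], _, _ => cases k <;> simp [List.count_cons]
    | true :: true :: w'', hc, _ =>
      cases k with
      | zero => simp
      | succ k' =>
        have h1 : 2 * ((true :: w'').take k').count false ≤ k' :=
          ih k' (by omega) (true :: w'') hc.tail (by simp)
        have : ((true :: true :: w'').take (k'+1)).count false
            = ((true :: w'').take k').count false := by
          simp [List.count_cons]
        omega
    | true :: false :: w'', hc, _ =>
      match k with
      | 0 => simp
      | 1 => simp [List.count_cons]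
      | (j+2) =>
        have hc'' : w''.Chain' (fun a b => a = true ∨ b = true) := hc.tail.tail
        have hh'' : w''.head? ≠ some false := by
          cases w'' with
          | nil => simp
          | cons b rest =>
            have hb : false = true ∨ b = true := (List.isChain_cons_cons.mp hc.tail).1
            simp at hb
            simp [hb]
        have h1 := ih j (by omega) w'' hc'' hh''
        have : ((true :: false :: w'').take (j+2)).count false
            = (w''.take j).count false + 1 := by
          simp [List.count_cons]
        omega

lemma canon_chain {l : List Bool} (hl : adjFree l) :
    (canonPath l).Chain' (fun a b => a = true ∨ b = true) := by
  unfold List.Chain'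
  rw [List.isChain_iff_getElem]
  intro i hi
  rw [canon_length] at hi
  have key : ∀ j (hj : j < (canonPath l).length),
      (canonPath l)[j]? = some ((canonPath l)[j]) := fun j hj => List.getElem?_eq_getElem hj
  -- analyze position i+1
  rcases Nat.eq_or_lt_of_le (Nat.succ_le_of_lt (by omega : i < l.length + 1)) with h' | h'
  · -- i + 1 = l.length + 1
    right
    have := canon_get_last l
    rw [← h'] at this
    rw [key (i+1) (by rw [canon_length]; omega)] at this
    exact Option.some.inj this
  · -- i + 1 < l.length + 1, so i < l.length
    have hilen : i < l.length := by omega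
    have hmid := canon_get_mid l hilen
    rw [key (i+1) (by rw [canon_length]; omega)] at hmid
    have hval : (canonPath l)[i+1] = !(l[i]) := Option.some.inj hmid
    cases hli : l[i] with
    | false => right; rw [hval, hli]; rfl
    | true =>
      left
      cases i with
      | zero =>
        have := canon_get_zero l
        rw [key 0 (by rw [canon_length]; omega)] at this
        exact Option.some.inj this
      | succ j =>
        have hj : j < l.length := by omega
        have hmj := canon_get_mid l hj
        rw [key (j+1) (by rw [canon_length]; omega)] at hmj
        have : (canonPath l)[j+1] = !(l[j]) := Option.some.inj hmj
        have hlj : l[j] = false := by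
          cases hljv : l[j] with
          | false => rfl
          | true =>
            exact (hl.not_both
              (by rw [List.getElem?_eq_getElem hj, hljv])
              (by rw [List.getElem?_eq_getElem hilen, hli])).elim
        rw [this, hlj]
        rfl

lemma canon_ballot {l : List Bool} (hl : adjFree l) : IsBallot (canonPath l) := by
  intro k
  set w := canonPath l with hw
  have hh : w.head? ≠ some false := by simp [hw, canonPath]
  have h2 := ballot_aux (min k w.length) w (canon_chain hl) hh
  have htk : w.take k = w.take (min k w.length) := by
    rw [List.take_eq_take_iff]
    omega
  have hlen : (w.take (min k w.length)).length = min k w.length := by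
    simp [List.length_take]
  have hsum := count_false_add_count_true (w.take (min k w.length))
  rw [htk]
  omega

/-! ### `occList` lemmas -/

lemma occList_length (p : List Bool) (m : ℕ) : (occList p m).length = m := by
  simp [occList]

lemma occList_getElem? (p : List Bool) {m i : ℕ} (h : i < m) :
    (occList p m)[i]? = some ((p.drop i).take 3 == [true, false, true]) := by
  simp [occList, List.getElem?_range h]

lemma occ_beq_iff (p : List Bool) (i : ℕ) :
    (((p.drop i).take 3 == [true, false, true]) = true) ↔ OccursAt [true, false, true] p i := by
  simp [OccursAt]

lemma occList_get_iff (p : List Bool) {m i : ℕ} (h : i < m) :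
    ((occList p m)[i]'(by rw [occList_length]; exact h)) = true
      ↔ OccursAt [true, false, true] p i := by
  have h1 := occList_getElem? p h
  rw [List.getElem?_eq_getElem (by rw [occList_length]; exact h)] at h1
  rw [Option.some.inj h1]
  exact occ_beq_iff p i

lemma occList_adjFree (p : List Bool) (m : ℕ) : adjFree (occList p m) := by
  unfold adjFree List.Chain'
  rw [List.isChain_iff_getElem]
  intro i hi
  rw [occList_length] at hi
  intro ht
  have h1 : OccursAt [true, false, true] p i := (occList_get_iff p (by omega)).mp ht
  cases hv : (occList p m)[i+1]'(by rw [occList_length]; omega) with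
  | false => rfl
  | true =>
    have h2 : OccursAt [true, false, true] p (i+1) := (occList_get_iff p (by omega)).mp hv
    exact absurd ⟨h1, h2⟩ (not_occ_adjacent p i)

/-! ### Counting `goodT` -/

instance goodT_finite (m : ℕ) : Finite (goodT m) := by
  apply Finite.of_injective
    (fun x : goodT m => fun i : Fin m => x.1[(i : ℕ)]'(by rw [x.2.1]; exact i.2))
  rintro ⟨a, ha, _⟩ ⟨b, hb, _⟩ h
  refine Subtype.ext (List.ext_getElem (ha.trans hb.symm) fun i h1 h2 => ?_)
  exact congrFun h ⟨i, by rw [← ha]; exact h1⟩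

def stepFun (m : ℕ) : goodT (m+1) ⊕ goodT m → goodT (m+2)
  | .inl l => ⟨false :: l.1, by simp [l.2.1],
      List.isChain_cons.mpr ⟨fun b _ h => absurd h (by simp), l.2.2⟩⟩
  | .inr l => ⟨true :: false :: l.1, by simp [l.2.1],
      List.isChain_cons_cons.mpr ⟨fun _ => rfl,
        List.isChain_cons.mpr ⟨fun b _ h => absurd h (by simp), l.2.2⟩⟩⟩

lemma stepFun_bijective (m : ℕ) : Function.Bijective (stepFun m) := by
  constructor
  · rintro (a | a) (b | b) h <;>
      simp only [stepFun] at h <;>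
      have hv := congrArg Subtype.val h
    · simp only [List.cons.injEq] at hv
      exact congrArg Sum.inl (Subtype.ext hv.2)
    · simp at hv
    · simp at hv
    · simp only [List.cons.injEq] at hv
      exact congrArg Sum.inr (Subtype.ext hv.2.2)
  · rintro ⟨w, hw, hadj⟩
    match w, hw with
    | false :: w', hw =>
      exact ⟨.inl ⟨w', by simpa using hw, hadj.tail⟩, rfl⟩
    | true :: w', hw =>
      match w', hw with
      | b :: w'', hw =>
        have hb : b = false := (List.isChain_cons_cons.mp hadj).1 rfl
        subst hb
        exact ⟨.inr ⟨w'', by simpa using hw, hadj.tail.tail⟩, rfl⟩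

lemma card_goodT_zero : Nat.card (goodT 0) = 1 := by
  have : Unique (goodT 0) :=
    { default := ⟨[], rfl, List.isChain_nil⟩,
      uniq := fun x => Subtype.ext (List.length_eq_zero_iff.mp x.2.1) }
  exact Nat.card_unique

def goodTOneEquiv : goodT 1 ≃ Bool where
  toFun x := x.1.headI
  invFun b := ⟨[b], rfl, List.isChain_singleton b⟩
  left_inv := by
    rintro ⟨l, hl, hadj⟩
    obtain ⟨a, rfl⟩ := List.length_eq_one_iff.mp hl
    rfl
  right_inv b := rfl

lemma card_goodT_one : Nat.card (goodT 1) = 2 := by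
  rw [Nat.card_congr goodTOneEquiv]
  simp

lemma card_goodT : ∀ m, Nat.card (goodT m) = Nat.fib (m+2)
  | 0 => by rw [card_goodT_zero]; rfl
  | 1 => by rw [card_goodT_one]; rfl
  | (m+2) => by
    have hstep : Nat.card (goodT (m+2)) = Nat.card (goodT (m+1)) + Nat.card (goodT m) := by
      rw [← Nat.card_eq_of_bijective (stepFun m) (stepFun_bijective m), Nat.card_sum]
    rw [hstep, card_goodT (m+1), card_goodT m]
    have h4 : Nat.fib (m+2+2) = Nat.fib (m+2) + Nat.fib (m+2+1) := Nat.fib_add_two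
    have h3 : Nat.fib (m+1+2) = Nat.fib (m+2+1) := by congr 1
    omega

/-! ### The main equivalence -/

def occT (m : ℕ) (p : {p : List Bool // IsBallot p ∧ p.length = m + 2}) : goodT m :=
  ⟨occList p.1 m, occList_length p.1 m, occList_adjFree p.1 m⟩

lemma occT_respects (m : ℕ) (p q : {p : List Bool // IsBallot p ∧ p.length = m + 2})
    (h : PathEquiv [true, false, true] p.1 q.1) : occT m p = occT m q := by
  refine Subtype.ext (List.ext_getElem? fun i => ?_)
  show (occList p.1 m)[i]? = (occList q.1 m)[i]?
  rcases Nat.lt_or_ge i m with hi | hi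
  · rw [occList_getElem? p.1 hi, occList_getElem? q.1 hi]
    congr 1
    rw [Bool.eq_iff_iff, occ_beq_iff, occ_beq_iff]
    exact h.2 i
  · rw [List.getElem?_eq_none (by rw [occList_length]; exact hi),
        List.getElem?_eq_none (by rw [occList_length]; exact hi)]

noncomputable def mainEquiv (m : ℕ) :
    Quotient (ballotSetoid [true, false, true] (m+2)) ≃ goodT m where
  toFun := Quotient.lift (occT m) (occT_respects m)
  invFun l := ⟦⟨canonPath l.1, canon_ballot l.2.2, by rw [canon_length, l.2.1]⟩⟧
  left_inv := by
    refine fun q => Quotient.inductionOn q fun p => Quotient.sound ?_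
    show PathEquiv [true, false, true] (canonPath (occList p.1 m)) p.1
    constructor
    · rw [canon_length, occList_length, p.2.2]
    · intro i
      rw [canon_occ (occList_adjFree p.1 m) i]
      constructor
      · rintro ⟨hi, ht⟩
        rw [occList_length] at hi
        exact (occList_get_iff p.1 hi).mp ht
      · intro hocc
        have hi : i < m := by
          by_contra hcon
          push_neg at hcon
          exact not_occurs_of_ge (by rw [p.2.2]; omega) hocc
        exact ⟨by rw [occList_length]; exact hi, (occList_get_iff p.1 hi).mpr hocc⟩
  right_inv := by
    rintro ⟨l, hl, hadj⟩
    refine Subtype.ext (List.ext_getElem? fun i => ?_)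
    show (occList (canonPath l) m)[i]? = l[i]?
    rcases Nat.lt_or_ge i m with hi | hi
    · have hil : i < l.length := by rw [hl]; exact hi
      rw [List.getElem?_eq_getElem (by rw [occList_length]; exact hi),
          List.getElem?_eq_getElem hil]
      congr 1
      rw [Bool.eq_iff_iff, occList_get_iff (canonPath l) hi, canon_occ hadj i]
      constructor
      · rintro ⟨_, ht⟩; exact ht
      · intro ht; exact ⟨hil, ht⟩
    · rw [List.getElem?_eq_none (by rw [occList_length]; exact hi),
          List.getElem?_eq_none (by rw [hl]; exact hi)]

lemma ballot_single : IsBallot [true] := by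
  intro k
  cases k <;> simp

/-- the number of UDU-equivalence classes of ballot paths of length
`n ≥ 1` is the `n`-th Fibonacci number. -/
theorem udu_classes_ballot (n : ℕ) (hn : 1 ≤ n) :
    numBallotClasses [true, false, true] n = Nat.fib n := by
  match n, hn with
  | 1, _ =>
    have huniq : ∀ p : {p : List Bool // IsBallot p ∧ p.length = 1}, p.1 = [true] := by
      rintro ⟨p, hb, hl⟩
      obtain ⟨a, rfl⟩ := List.length_eq_one_iff.mp hl
      cases a with
      | false =>
        have := hb 1
        simp [List.count_cons] at this
      | true => rfl
    rw [numBallotClasses, show Nat.fib 1 = 1 from rfl]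
    rw [Nat.card_eq_one_iff_unique]
    constructor
    · constructor
      intro a b
      refine Quotient.inductionOn₂ a b fun p q => Quotient.sound ?_
      have : p.1 = q.1 := (huniq p).trans (huniq q).symm
      show PathEquiv [true, false, true] p.1 q.1
      rw [this]
      exact ⟨rfl, fun _ => Iff.rfl⟩
    · exact ⟨⟦⟨[true], ballot_single, rfl⟩⟧⟩
  | (m+2), _ =>
    rw [numBallotClasses, Nat.card_congr (mainEquiv m), card_goodT m]
end

section
/- Let p be a Dyck path and let p′ be a ballot path that is UUU-equivalent to p and satisfies all of the following: p′ does not begin with UUDD, p′ contains no occurrence of the factor DUDD and no occurrence of the factor DUUD, p′ contains no occurrence of DUD at height greater than 1, and p′ either ends with UUU, or ends with D, or p′ is the empty path, or p′ = U. Then p′ is a Dyck path. -/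
lemma count_tf (l : List Bool) : l.count true + l.count false = l.length := by
  induction l with
  | nil => simp
  | cons a t ih => cases a <;> simp [List.count_cons] <;> omega

lemma height_step {l : List Bool} {j : ℕ} {b : Bool} (h : l[j]? = some b) :
    pathHeight l (j+1) = pathHeight l j + (if b then 1 else -1) := by
  unfold pathHeight
  rw [List.take_succ, h]
  cases b <;> simp [List.count_append] <;> omega

lemma ballot_nonneg {l : List Bool} (h : IsBallot l) (j : ℕ) : 0 ≤ pathHeight l j := by
  have := h j; unfold pathHeight; omega

lemma height_formula (l : List Bool) (j : ℕ) :
    pathHeight l j = 2 * ((l.take j).count true : ℤ) - ((l.take j).length : ℤ) := by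
  have := count_tf (l.take j); unfold pathHeight; omega

lemma occursAt_iff_s15 {τ l : List Bool} {i : ℕ} :
    OccursAt τ l i ↔ ∀ k, k < τ.length → l[i+k]? = τ[k]? := by
  unfold OccursAt
  constructor
  · intro h k hk
    have h1 : ((l.drop i).take τ.length)[k]? = τ[k]? := by rw [h]
    rwa [List.getElem?_take, if_pos hk, List.getElem?_drop] at h1
  · intro h
    apply List.ext_getElem?
    intro k
    by_cases hk : k < τ.length
    · rw [List.getElem?_take, if_pos hk, List.getElem?_drop]; exact h k hk
    · rw [List.getElem?_take, if_neg hk, Eq.comm]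
      exact List.getElem?_eq_none (by omega)

/-- a ballot path which is UUU-equivalent to a Dyck path and satisfies
all the representative conditions for the string UUU is itself a Dyck path. -/
theorem uuu_representative_of_dyck_is_dyck (p p' : List Bool)
    (hp : IsDyck p) (hp' : IsBallot p')
    (hequiv : PathEquiv [true, true, true] p p')
    (h1 : ¬ [true, true, false, false] <+: p')
    (h2 : ¬ [false, true, false, false] <:+: p')
    (h3 : ¬ [false, true, true, false] <:+: p')
    (h4 : ∀ i : ℕ, OccursAt [false, true, false] p' i →
      ∃ j : ℕ, i ≤ j ∧ j ≤ i + 3 ∧ pathHeight p' j ≤ 1)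
    (h5 : [true, true, true] <:+ p' ∨ [false] <:+ p' ∨ p' = [] ∨ p' = [true]) :
    IsDyck p' := by
  have hlen : p.length = p'.length := hequiv.1
  have uuu : ∀ i, p'[i]? = some true → p'[i+1]? = some true → p'[i+2]? = some true →
      p[i]? = some true ∧ p[i+1]? = some true ∧ p[i+2]? = some true := by
    intro i ha hb hc
    have hocc : OccursAt [true,true,true] p' i := by
      rw [occursAt_iff_s15]; intro k hk
      have hk' : k < 3 := hk
      interval_cases k <;> simp_all
    have hocc' := (hequiv.2 i).mpr hocc
    rw [occursAt_iff_s15] at hocc'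
    refine ⟨?_, ?_, ?_⟩
    · have := hocc' 0 (by norm_num); simpa using this
    · have := hocc' 1 (by norm_num); simpa using this
    · have := hocc' 2 (by norm_num); simpa using this
  have infix4 : ∀ (i:ℕ) (a b c d : Bool), p'[i]? = some a → p'[i+1]? = some b →
      p'[i+2]? = some c → p'[i+3]? = some d → [a,b,c,d] <:+: p' := by
    intro i a b c d ha hb hc hd
    have hocc : OccursAt [a,b,c,d] p' i := by
      rw [occursAt_iff_s15]; intro k hk
      have hk' : k < 4 := hk
      interval_cases k <;> simp_all
    have hocc2 : (p'.drop i).take 4 = [a,b,c,d] := hocc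
    rw [← hocc2]
    exact (List.take_prefix _ _).isInfix.trans (List.drop_suffix _ _).isInfix
  have endU : ∀ j, p'[j]? = some true → p'[j+1]? = none →
      p' = [true] ∨ ∃ i, j = i + 2 ∧ p'[i]? = some true ∧ p'[i+1]? = some true := by
    intro j hj hnone
    have hjlen : j < p'.length := (List.getElem?_eq_some_iff.mp hj).1
    have hlen2 : p'.length ≤ j + 1 := List.getElem?_eq_none_iff.mp hnone
    rcases h5 with h | h | h | h
    · obtain ⟨t, ht⟩ := h
      have hlt : t.length + 3 = p'.length := by
        have := congrArg List.length ht; simpa using this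
      right
      refine ⟨t.length, by omega, ?_, ?_⟩
      · rw [← ht, List.getElem?_append_right (le_refl _)]; simp
      · have h9 : t.length + 1 - t.length = 1 := by omega
        rw [← ht, List.getElem?_append_right (by omega), h9]; simp
    · obtain ⟨t, ht⟩ := h
      have hlt : t.length + 1 = p'.length := by
        have := congrArg List.length ht; simpa using this
      have htj : t.length = j := by omega
      have hcontra : p'[j]? = some false := by
        rw [← ht, ← htj]; exact List.getElem?_concat_length
      rw [hcontra] at hj; exact absurd hj (by simp)
    · rw [h] at hj; simp at hj
    · exact Or.inl h
  have L : ∀ j, p'[j]? = some true → p[j]? = some false →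
      p'[j+1]? = some false ∧ pathHeight p' (j+1) ≤ 2 := by
    intro j hj hpj
    rcases j with _ | m
    · exfalso
      have h0 := ballot_nonneg hp.1 1
      have he : pathHeight p 1 = pathHeight p 0 + (-1) := height_step hpj
      have hz : pathHeight p 0 = 0 := by simp [pathHeight]
      omega
    · show p'[m+2]? = some false ∧ pathHeight p' (m+2) ≤ 2
      cases hbm : p'[m]? with
      | none =>
        exfalso
        have hjlen : m+1 < p'.length := (List.getElem?_eq_some_iff.mp hj).1
        have := List.getElem?_eq_none_iff.mp hbm
        omega
      | some b =>
        cases b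
        · -- p'[m] = D
          cases hb1 : p'[m+2]? with
          | some c =>
            cases c
            · -- DUD : use h4
              have hocc : OccursAt [false,true,false] p' m := by
                rw [occursAt_iff_s15]; intro k hk
                have hk' : k < 3 := hk
                interval_cases k <;> simp_all
              obtain ⟨j'', hj1, hj2, hle⟩ := h4 m hocc
              have e1 : pathHeight p' (m+1) = pathHeight p' m + (-1) := height_step hbm
              have e2 : pathHeight p' (m+2) = pathHeight p' (m+1) + 1 := height_step hj
              have e3 : pathHeight p' (m+3) = pathHeight p' (m+2) + (-1) := height_step hb1
              refine ⟨by simp, ?_⟩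
              have hcase : j'' = m ∨ j'' = m+1 ∨ j'' = m+2 ∨ j'' = m+3 := by omega
              rcases hcase with rfl | rfl | rfl | rfl <;> omega
            · -- D U U : look one further
              cases hb2 : p'[m+3]? with
              | some d =>
                cases d
                · exact absurd (infix4 m false true true false hbm hj hb1 hb2) h3
                · have h9 := (uuu (m+1) hj hb1 hb2).1
                  rw [hpj] at h9; exact absurd h9 (by simp)
              | none =>
                exfalso
                rcases endU (m+2) hb1 hb2 with h | ⟨i, hi, hi1, hi2⟩
                · rw [h] at hj
                  have := (List.getElem?_eq_some_iff.mp hj).1; simp at this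
                · have him : i = m := by omega
                  rw [him, hbm] at hi1; exact absurd hi1 (by simp)
          | none =>
            exfalso
            rcases endU (m+1) hj hb1 with h | ⟨i, hi, hi1, hi2⟩
            · rw [h] at hj
              have := (List.getElem?_eq_some_iff.mp hj).1; simp at this
            · have him : i + 1 = m := by omega
              rw [him, hbm] at hi2; exact absurd hi2 (by simp)
        · -- p'[m] = U
          rcases m with _ | k
          · -- j = 1, p' starts U U
            cases hb1 : p'[2]? with
            | some c =>
              cases c
              · refine ⟨by simp, ?_⟩
                show pathHeight p' 2 ≤ 2
                have hz : pathHeight p' 0 = 0 := by simp [pathHeight]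
                have e1 : pathHeight p' 1 = pathHeight p' 0 + 1 := height_step hbm
                have e2 : pathHeight p' 2 = pathHeight p' 1 + 1 := height_step hj
                omega
              · have h9 := (uuu 0 hbm hj hb1).2.1
                have hpj' : p[0+1]? = some false := hpj
                rw [hpj'] at h9; exact absurd h9 (by simp)
            | none =>
              exfalso
              rcases endU 1 hj hb1 with h | ⟨i, hi, hi1, hi2⟩
              · rw [h] at hj
                have := (List.getElem?_eq_some_iff.mp hj).1; simp at this
              · omega
          · cases hbk : p'[k]? with
            | none =>
              exfalso
              have hjlen : k+2 < p'.length := (List.getElem?_eq_some_iff.mp hj).1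
              have := List.getElem?_eq_none_iff.mp hbk
              omega
            | some bk =>
              cases bk
              · -- D U U at k
                cases hb1 : p'[k+3]? with
                | some c =>
                  cases c
                  · exact absurd (infix4 k false true true false hbk hbm hj hb1) h3
                  · have h9 := (uuu (k+1) hbm hj hb1).2.1
                    have hpj' : p[k+1+1]? = some false := hpj
                    rw [hpj'] at h9; exact absurd h9 (by simp)
                | none =>
                  exfalso
                  rcases endU (k+2) hj hb1 with h | ⟨i, hi, hi1, hi2⟩
                  · rw [h] at hj
                    have := (List.getElem?_eq_some_iff.mp hj).1; simp at this
                  · have him : i = k := by omega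
                    rw [him, hbk] at hi1; exact absurd hi1 (by simp)
              · have h9 := (uuu k hbk hbm hj).2.2
                have hpj' : p[k+2]? = some false := hpj
                rw [hpj'] at h9; exact absurd h9 (by simp)
  have heven : ∀ j, ∃ m : ℤ, pathHeight p' j - pathHeight p j = 2*m := by
    intro j
    refine ⟨((p'.take j).count true : ℤ) - ((p.take j).count true : ℤ), ?_⟩
    have hf1 := height_formula p j
    have hf2 := height_formula p' j
    have hf3 : (p.take j).length = (p'.take j).length := by
      simp [List.length_take, hlen]
    omega
  have main : ∀ j, j ≤ p'.length →
      (pathHeight p' j - pathHeight p j ≤ 0 ∨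
       (pathHeight p' j - pathHeight p j ≤ 2 ∧ pathHeight p' j ≤ 2 ∧ p'[j]? = some false)) := by
    intro j
    induction j with
    | zero => intro _; left; simp [pathHeight]
    | succ j ih =>
      intro hj1
      have hjlt : j < p'.length := by omega
      have ihj := ih (by omega)
      obtain ⟨b, hb⟩ : ∃ b, p'[j]? = some b := ⟨p'[j]'hjlt, List.getElem?_eq_getElem hjlt⟩
      obtain ⟨c, hc⟩ : ∃ c, p[j]? = some c :=
        ⟨p[j]'(by omega), List.getElem?_eq_getElem (by omega)⟩
      cases b
      · -- p' does D
        left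
        have e' : pathHeight p' (j+1) = pathHeight p' j + (-1) := height_step hb
        rcases ihj with hΦ | ⟨hΦ, hH, _⟩
        · cases c
          · have e : pathHeight p (j+1) = pathHeight p j + (-1) := height_step hc
            omega
          · have e : pathHeight p (j+1) = pathHeight p j + 1 := height_step hc
            omega
        · obtain ⟨mm, hm⟩ := heven (j+1)
          have hnnp := ballot_nonneg hp.1 (j+1)
          omega
      · -- p' does U
        have e' : pathHeight p' (j+1) = pathHeight p' j + 1 := height_step hb
        cases c
        · -- p does D : apply L
          have e : pathHeight p (j+1) = pathHeight p j + (-1) := height_step hc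
          obtain ⟨hnext, hh2⟩ := L j hb hc
          rcases ihj with hΦ | ⟨_, _, hbad⟩
          · right
            exact ⟨by omega, hh2, hnext⟩
          · rw [hb] at hbad; exact absurd hbad (by simp)
        · -- both U
          have e : pathHeight p (j+1) = pathHeight p j + 1 := height_step hc
          rcases ihj with hΦ | ⟨_, _, hbad⟩
          · left; omega
          · rw [hb] at hbad; exact absurd hbad (by simp)
  have hfin := main p'.length (le_refl _)
  have hnone : p'[p'.length]? = none := List.getElem?_eq_none (le_refl _)
  rcases hfin with hΦ | ⟨_, _, hbad⟩
  · have hpfin : pathHeight p p'.length = 0 := by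
      unfold pathHeight
      rw [← hlen, List.take_length, hp.2]; ring
    have h0 : 0 ≤ pathHeight p' p'.length := ballot_nonneg hp' _
    have hz : pathHeight p' p'.length = 0 := by omega
    refine ⟨hp', ?_⟩
    unfold pathHeight at hz
    rw [List.take_length] at hz
    omega
  · rw [hnone] at hbad; exact absurd hbad (by simp)
end
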